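/- arXiv:1606.03872 — 2 statements merged into one kernel-verified Lean document; each statement's English description precedes it below -/
import Mathlib

section
/- For every pair of integers k ≥ 3 and ℓ ≥ 1, there exists a positive integer N_2 = N_2(k,ℓ) such that px_{k,ℓ}(K_{n,n}) = 2 for every integer n ≥ N_2. -/
open SimpleGraph

/-- `T` is an `S`-tree in `G`: a subtree of `G` containing all vertices of `S`. -/
def IsSTree {V : Type*} (G : SimpleGraph V) (S : Set V) (T : G.Subgraph) : Prop :=
  T.coe.IsTree ∧ S ⊆ T.verts

/-- A family of subgraphs is internally disjoint with respect to `S`: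
pairwise edge-disjoint, and pairwise vertex intersection exactly `S`. -/
def InternallyDisjoint {V ι : Type*} {G : SimpleGraph V} (S : Set V)
    (T : ι → G.Subgraph) : Prop :=
  ∀ i j, i ≠ j → (T i).edgeSet ∩ (T j).edgeSet = ∅ ∧ (T i).verts ∩ (T j).verts = S

/-- No two adjacent edges of the subgraph `T` receive the same color under `c`. -/
def ProperSubgraph {V α : Type*} {G : SimpleGraph V} (c : Sym2 V → α) (T : G.Subgraph) : Prop :=
  ∀ u v w, T.Adj u v → T.Adj u w → v ≠ w → c s(u, v) ≠ c s(u, w)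

/-- `c` is a `(k,ℓ)`-proper coloring of `G`: every `k`-subset `S` of vertices is connected by
`ℓ` internally disjoint proper `S`-trees. -/
def IsProperColoring {V α : Type*} (G : SimpleGraph V) (k ℓ : ℕ) (c : Sym2 V → α) : Prop :=
  ∀ S : Finset V, S.card = k →
    ∃ T : Fin ℓ → G.Subgraph,
      (∀ i, IsSTree G (S : Set V) (T i) ∧ ProperSubgraph c (T i)) ∧
      InternallyDisjoint (S : Set V) T

/-- The `(k,ℓ)`-proper index of `G` is at most `m`. -/
def pxLE {V : Type*} (G : SimpleGraph V) (k ℓ m : ℕ) : Prop :=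
  ∃ c : Sym2 V → Fin m, IsProperColoring G k ℓ c

/-- The `(k,ℓ)`-proper index of `G` equals `2`. -/
def pxEq2 {V : Type*} (G : SimpleGraph V) (k ℓ : ℕ) : Prop :=
  pxLE G k ℓ 2 ∧ ¬ pxLE G k ℓ 1



lemma acyclic_of_grading {W : Type*} {H : SimpleGraph W} (g : W → ℕ)
    (hinj : Function.Injective g)
    (hadj : ∀ x y, H.Adj x y → g x + 1 = g y ∨ g y + 1 = g x) : H.IsAcyclic := by
  have aux : ∀ v w, H.Adj v w → g v + 1 = g w → H.IsBridge s(v, w) := by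
    intro v w hvw hg
    rw [isBridge_iff]
    refine fun hr => ?_
    obtain ⟨p⟩ := hr
    obtain ⟨d, hd, hfst, hsnd⟩ := p.exists_boundary_dart {x | g x ≤ g v}
      (by simp) (by simp [← hg])
    have hda := d.adj
    simp only [deleteEdges_adj, Set.mem_singleton_iff] at hda
    have := hadj _ _ hda.1
    have h1 : g d.fst = g v := by
      rcases this with h | h
      · simp only [Set.mem_setOf_eq] at hfst hsnd; omega
      · simp only [Set.mem_setOf_eq] at hfst hsnd; omega
    have h2 : g d.snd = g w := by
      rcases this with h | h
      · simp only [Set.mem_setOf_eq] at hfst hsnd; omega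
      · simp only [Set.mem_setOf_eq] at hfst hsnd; omega
    have hv : d.fst = v := hinj h1
    have hw : d.snd = w := hinj h2
    rw [hv, hw] at hda
    exact hda.2 rfl
  rw [isAcyclic_iff_forall_adj_isBridge]
  intro v w hvw
  rcases hadj v w hvw with h | h
  · exact aux v w hvw h
  · rw [Sym2.eq_swap]; exact aux w v hvw.symm h


section PathSub
variable {V : Type*} {G : SimpleGraph V} (q : ℕ → V) (m : ℕ)

def pathSub (hadj : ∀ i, i < m → G.Adj (q i) (q (i+1))) : G.Subgraph where
  verts := q '' Set.Iic m
  Adj x y := ∃ i, i < m ∧ ((x = q i ∧ y = q (i+1)) ∨ (y = q i ∧ x = q (i+1)))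
  adj_sub := by
    rintro x y ⟨i, hi, (⟨rfl, rfl⟩ | ⟨rfl, rfl⟩)⟩
    · exact hadj i hi
    · exact (hadj i hi).symm
  edge_vert := by
    rintro x y ⟨i, hi, (⟨rfl, rfl⟩ | ⟨rfl, rfl⟩)⟩
    · exact ⟨i, le_of_lt hi, rfl⟩
    · exact ⟨i + 1, hi, rfl⟩
  symm := by
    constructor
    rintro x y ⟨i, hi, h⟩
    exact ⟨i, hi, h.symm⟩

variable {q m}
variable (hadj : ∀ i, i < m → G.Adj (q i) (q (i+1)))
    (hinj : ∀ i ≤ m, ∀ j ≤ m, q i = q j → i = j)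

lemma pathSub_verts : (pathSub q m hadj).verts = q '' Set.Iic m := rfl

lemma pathSub_adj {x y : V} :
    (pathSub q m hadj).Adj x y ↔
      ∃ i, i < m ∧ ((x = q i ∧ y = q (i+1)) ∨ (y = q i ∧ x = q (i+1))) := Iff.rfl

include hinj in
lemma pathSub_isTree : (pathSub q m hadj).coe.IsTree := by
  set T := pathSub q m hadj with hT
  have hmem : ∀ i, i ≤ m → q i ∈ T.verts := fun i hi => ⟨i, hi, rfl⟩
  constructor
  · -- connected
    have key : ∀ i (hi : i ≤ m),
        T.coe.Reachable ⟨q 0, hmem 0 (Nat.zero_le m)⟩ ⟨q i, hmem i hi⟩ := by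
      intro i
      induction i with
      | zero => intro _; rfl
      | succ i ih =>
        intro hi
        refine (ih (by omega)).trans (Adj.reachable ?_)
        exact ⟨i, by omega, Or.inl ⟨rfl, rfl⟩⟩
    haveI : Nonempty T.verts := ⟨⟨q 0, hmem 0 (Nat.zero_le m)⟩⟩
    refine ⟨?_⟩
    rintro ⟨x, i, hi, rfl⟩ ⟨y, j, hj, rfl⟩
    exact (key i hi).symm.trans (key j hj)
  · -- acyclic
    have hex : ∀ x : T.verts, ∃ i, i ≤ m ∧ q i = ↑x := by
      rintro ⟨x, i, hi, rfl⟩; exact ⟨i, hi, rfl⟩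
    refine acyclic_of_grading (fun x => (hex x).choose) ?_ ?_
    · intro x y hxy
      change (hex x).choose = (hex y).choose at hxy
      have hx := (hex x).choose_spec
      have hy := (hex y).choose_spec
      apply Subtype.ext
      rw [← hx.2, ← hy.2, hxy]
    · rintro x y hxy
      change T.coe.Adj x y at hxy
      show (hex x).choose + 1 = (hex y).choose ∨ (hex y).choose + 1 = (hex x).choose
      have hx := (hex x).choose_spec
      have hy := (hex y).choose_spec
      obtain ⟨i, hi, h | h⟩ := hxy
      · have e1 : (hex x).choose = i := hinj _ hx.1 i (by omega) (by rw [hx.2, ← h.1])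
        have e2 : (hex y).choose = i + 1 := hinj _ hy.1 (i+1) (by omega) (by rw [hy.2, ← h.2])
        omega
      · have e1 : (hex y).choose = i := hinj _ hy.1 i (by omega) (by rw [hy.2, ← h.1])
        have e2 : (hex x).choose = i + 1 := hinj _ hx.1 (i+1) (by omega) (by rw [hx.2, ← h.2])
        omega

include hinj in
lemma pathSub_proper {α : Type*} (c : Sym2 V → α)
    (hc : ∀ i, i + 2 ≤ m → c s(q i, q (i+1)) ≠ c s(q (i+1), q (i+2))) :
    ∀ u v w, (pathSub q m hadj).Adj u v → (pathSub q m hadj).Adj u w → v ≠ w →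
      c s(u, v) ≠ c s(u, w) := by
  intro u v w huv huw hvw
  obtain ⟨i, hi, hiuv⟩ := huv
  obtain ⟨j, hj, hjuw⟩ := huw
  rcases hiuv with ⟨hu, hv⟩ | ⟨hv, hu⟩ <;> rcases hjuw with ⟨hu', hw⟩ | ⟨hw, hu'⟩
  · exact absurd (by rw [hv, hw, hinj i (by omega) j (by omega) (hu ▸ hu' ▸ rfl)]) hvw
  · -- u = q i, v = q (i+1), w = q j, u = q (j+1) : i = j + 1
    have e : i = j + 1 := hinj i (by omega) (j+1) (by omega) (hu ▸ hu' ▸ rfl)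
    subst e
    rw [hu, hv, hw]
    have := hc j (by omega)
    rw [show s(q (j+1), q j) = s(q j, q (j+1)) from Sym2.eq_swap]
    exact this.symm
  · -- v = q i, u = q (i+1), u = q j, w = q (j+1) : j = i + 1
    have e : j = i + 1 := hinj j (by omega) (i+1) (by omega) (hu' ▸ hu ▸ rfl)
    subst e
    rw [hu, hv, hw]
    have := hc i (by omega)
    rw [show s(q (i+1), q i) = s(q i, q (i+1)) from Sym2.eq_swap]
    exact this
  · have e : i = j := by
      have := hinj (i+1) (by omega) (j+1) (by omega) (hu ▸ hu' ▸ rfl); omega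
    subst e
    exact absurd (by rw [hv, hw]) hvw

end PathSub


attribute [local instance] Classical.propDecidable

section Constr

variable {n : ℕ} [NeZero n]

abbrev BV (n : ℕ) := Fin n ⊕ Fin n

def bside (v : BV n) : Bool := v.isLeft

def bfval (v : BV n) : Bool := decide ((Sum.elim Fin.val Fin.val v) % 2 = 1)

lemma cbg_adj (u v : BV n) : (completeBipartiteGraph (Fin n) (Fin n)).Adj u v ↔ bside u ≠ bside v := by
  cases u <;> cases v <;> simp [completeBipartiteGraph, bside]

def bcol : Sym2 (BV n) → Fin 2 :=
  Sym2.lift ⟨fun u v => if bfval u = bfval v then 0 else 1, by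
    intro u v; simp only [eq_comm]⟩

lemma bcol_ne (u v w : BV n) (h : bfval v ≠ bfval w) : bcol s(u, v) ≠ bcol s(u, w) := by
  simp only [bcol, Sym2.lift_mk]
  cases hv : bfval v <;> cases hw : bfval w <;> cases hu : bfval u <;>
    simp_all

variable (S : Finset (BV n)) (k ℓ : ℕ)

noncomputable def sv (j : ℕ) : BV n := S.toList.getD j default

noncomputable def sig (i : ℕ) : Bool := if i % 2 = 0 then bside (sv S 0) else !bside (sv S 0)

noncomputable def Fv (i : ℕ) : Bool :=
  xor (if i % 2 = 0 then bfval (sv S 0) else false) (decide ((i / 2) % 2 = 1))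

lemma sig_succ (i : ℕ) : sig S (i + 1) = !(sig S i) := by
  rcases Nat.mod_two_eq_zero_or_one i with h | h <;>
    · have h2 : (i + 1) % 2 = 1 - i % 2 := by omega
      simp [sig, h, h2]

lemma Fv_add_two (i : ℕ) : Fv S (i + 2) = !(Fv S i) := by
  have h1 : (i + 2) % 2 = i % 2 := by omega
  have h2 : (i + 2) / 2 = i / 2 + 1 := by omega
  rcases Nat.mod_two_eq_zero_or_one (i / 2) with h | h <;>
    · have h3 : (i / 2 + 1) % 2 = 1 - (i / 2) % 2 := by omega
      simp only [Fv, h1, h2, h3, h]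
      cases (if i % 2 = 0 then bfval (sv S 0) else false) <;> simp

noncomputable def bstep (p j : ℕ) : ℕ :=
  if sig S (p + 2) = bside (sv S j) then (if Fv S (p + 2) = bfval (sv S j) then 2 else 4)
  else (if Fv S (p + 3) = bfval (sv S j) then 3 else 5)

lemma bstep_ge (p j : ℕ) : 2 ≤ bstep S p j := by
  unfold bstep; split_ifs <;> omega

lemma bstep_le (p j : ℕ) : bstep S p j ≤ 5 := by
  unfold bstep; split_ifs <;> omega

lemma bstep_sig (p j : ℕ) : sig S (p + bstep S p j) = bside (sv S j) := by
  have h3 : sig S (p + 3) = !(sig S (p + 2)) := by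
    rw [show p + 3 = p + 2 + 1 by ring, sig_succ]
  have h4 : ∀ x, sig S (x + 2) = sig S x := by
    intro x; rw [show x + 2 = x + 1 + 1 by ring, sig_succ, sig_succ, Bool.not_not]
  unfold bstep
  split_ifs with h1 h2 h2
  · exact h1
  · rw [show p + 4 = p + 2 + 2 by ring, h4]; exact h1
  · rw [show p + 3 = p + 2 + 1 by ring, sig_succ]
    cases hs : sig S (p + 2) <;> cases ht : bside (sv S j) <;> simp_all
  · rw [show p + 5 = p + 3 + 2 by ring, h4, h3]
    cases hs : sig S (p + 2) <;> cases ht : bside (sv S j) <;> simp_all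

lemma bstep_Fv (p j : ℕ) : Fv S (p + bstep S p j) = bfval (sv S j) := by
  unfold bstep
  split_ifs with h1 h2 h2
  · exact h2
  · rw [show p + 4 = p + 2 + 2 by ring, Fv_add_two]
    cases hx : Fv S (p + 2) <;> cases hy : bfval (sv S j) <;> simp_all
  · exact h2
  · rw [show p + 5 = p + 3 + 2 by ring, Fv_add_two]
    cases hx : Fv S (p + 3) <;> cases hy : bfval (sv S j) <;> simp_all

noncomputable def bpos : ℕ → ℕ
  | 0 => 0
  | j + 1 => bpos j + bstep S (bpos j) (j + 1)

lemma bpos_constraint (j : ℕ) :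
    sig S (bpos S j) = bside (sv S j) ∧ Fv S (bpos S j) = bfval (sv S j) := by
  cases j with
  | zero =>
    constructor
    · simp [bpos, sig]
    · simp [Fv, bpos]
  | succ j => exact ⟨bstep_sig S _ _, bstep_Fv S _ _⟩

lemma bpos_mono {j1 j2 : ℕ} (h : j1 < j2) : bpos S j1 + 2 ≤ bpos S j2 := by
  induction j2 with
  | zero => omega
  | succ j2 ih =>
    have h2 := bstep_ge S (bpos S j2) (j2 + 1)
    rcases Nat.lt_or_ge j1 j2 with h3 | h3
    · have := ih h3; simp only [bpos]; omega
    · have e : j1 = j2 := by omega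
      subst e; simp only [bpos]; omega

lemma bpos_le (j : ℕ) : bpos S j ≤ 5 * j := by
  induction j with
  | zero => simp [bpos]
  | succ j ih =>
    have := bstep_le S (bpos S j) (j + 1)
    simp only [bpos]; omega

lemma bpos_inj {j1 j2 : ℕ} (h : bpos S j1 = bpos S j2) : j1 = j2 := by
  rcases Nat.lt_trichotomy j1 j2 with h1 | h1 | h1
  · have := bpos_mono S h1; omega
  · exact h1
  · have := bpos_mono S h1; omega


noncomputable def Aset (b c : Bool) : Finset (Fin n) :=
  Finset.univ.filter (fun a => decide (a.val % 2 = 1) = c ∧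
    (if b then (Sum.inl a : BV n) else Sum.inr a) ∉ S)

noncomputable def connval (b c : Bool) (r : ℕ) : Fin n :=
  if h : ℓ * (5 * k + 6) ≤ (Aset S b c).card ∧ 0 < ℓ * (5 * k + 6) then
    (Aset S b c).orderEmbOfCardLe h.1 ⟨min r (ℓ * (5 * k + 6) - 1), by omega⟩
  else default

variable {S k ℓ} (hcard : ∀ b c, ℓ * (5 * k + 6) ≤ (Aset S b c).card) (hl : 1 ≤ ℓ) (hk : 3 ≤ k)

include hcard hl hk in
lemma connval_mem (b c : Bool) (r : ℕ) : connval S k ℓ b c r ∈ Aset S b c := by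
  rw [connval, dif_pos ⟨hcard b c, by positivity⟩]
  exact (Aset S b c).orderEmbOfCardLe_mem _ _

include hcard hl hk in
lemma connval_inj (b c : Bool) {r1 r2 : ℕ} (h1 : r1 < ℓ * (5 * k + 6))
    (h2 : r2 < ℓ * (5 * k + 6)) (he : connval S k ℓ b c r1 = connval S k ℓ b c r2) :
    r1 = r2 := by
  rw [connval, dif_pos ⟨hcard b c, by positivity⟩, connval, dif_pos ⟨hcard b c, by positivity⟩]
    at he
  have := (Aset S b c).orderEmbOfCardLe (k := ℓ * (5 * k + 6)) (hcard b c) |>.injective he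
  have h3 : min r1 (ℓ * (5 * k + 6) - 1) = r1 := by omega
  have h4 : min r2 (ℓ * (5 * k + 6) - 1) = r2 := by omega
  have := congrArg Fin.val this
  simp only [h3, h4] at this
  exact this

variable (S k ℓ) in
noncomputable def conn (t i : ℕ) : BV n :=
  if sig S i then Sum.inl (connval S k ℓ true (Fv S i) (t * (5 * k + 6) + i))
  else Sum.inr (connval S k ℓ false (Fv S i) (t * (5 * k + 6) + i))

include hcard hl hk in
lemma conn_spec (t i : ℕ) :
    bside (conn S k ℓ t i) = sig S i ∧ bfval (conn S k ℓ t i) = Fv S i ∧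
      conn S k ℓ t i ∉ S := by
  unfold conn
  split_ifs with h
  · have hm := connval_mem hcard hl hk true (Fv S i) (t * (5 * k + 6) + i)
    simp only [Aset, Finset.mem_filter, if_pos] at hm
    refine ⟨by simp [bside, h], by simp only [bfval, Sum.elim_inl]; convert hm.2.1; exact decide_eq_decide.mpr Iff.rfl, by simpa using hm.2.2⟩
  · have hm := connval_mem hcard hl hk false (Fv S i) (t * (5 * k + 6) + i)
    simp only [Aset, Finset.mem_filter, if_neg] at hm
    refine ⟨by simp only [bside, Sum.isLeft_inr]; simp only [Bool.not_eq_true] at h; exact h.symm,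
      by simp only [bfval, Sum.elim_inr]; convert hm.2.1; exact decide_eq_decide.mpr Iff.rfl, by simpa using hm.2.2⟩

include hcard hl hk in
lemma conn_inj {t1 t2 i1 i2 : ℕ} (ht1 : t1 < ℓ) (ht2 : t2 < ℓ)
    (hi1 : i1 < 5 * k + 6) (hi2 : i2 < 5 * k + 6)
    (he : conn S k ℓ t1 i1 = conn S k ℓ t2 i2) : t1 = t2 ∧ i1 = i2 := by
  have key : ∀ b : Bool, connval S k ℓ b (Fv S i1) (t1 * (5 * k + 6) + i1) =
      connval S k ℓ b (Fv S i2) (t2 * (5 * k + 6) + i2) → t1 = t2 ∧ i1 = i2 := by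
    intro b hv
    have m1 := connval_mem hcard hl hk b (Fv S i1) (t1 * (5 * k + 6) + i1)
    have m2 := connval_mem hcard hl hk b (Fv S i2) (t2 * (5 * k + 6) + i2)
    simp only [Aset, Finset.mem_filter] at m1 m2
    have hF : Fv S i1 = Fv S i2 := by rw [← m1.2.1, hv, m2.2.1]
    rw [hF] at hv
    have hr : t1 * (5 * k + 6) + i1 = t2 * (5 * k + 6) + i2 := by
      refine connval_inj hcard hl hk b (Fv S i2) ?_ ?_ hv
      · calc t1 * (5 * k + 6) + i1 < t1 * (5 * k + 6) + (5 * k + 6) := by omega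
          _ = (t1 + 1) * (5 * k + 6) := by ring
          _ ≤ ℓ * (5 * k + 6) := Nat.mul_le_mul_right _ (by omega)
      · calc t2 * (5 * k + 6) + i2 < t2 * (5 * k + 6) + (5 * k + 6) := by omega
          _ = (t2 + 1) * (5 * k + 6) := by ring
          _ ≤ ℓ * (5 * k + 6) := Nat.mul_le_mul_right _ (by omega)
    constructor
    · by_contra hne
      rcases Nat.lt_or_ge t1 t2 with h | h
      · have : (t1 + 1) * (5 * k + 6) ≤ t2 * (5 * k + 6) := Nat.mul_le_mul_right _ (by omega)
        nlinarith
      · have : t2 < t1 := by omega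
        have : (t2 + 1) * (5 * k + 6) ≤ t1 * (5 * k + 6) := Nat.mul_le_mul_right _ (by omega)
        nlinarith
    · have ht : t1 = t2 := by
        by_contra hne
        rcases Nat.lt_or_ge t1 t2 with h | h
        · have : (t1 + 1) * (5 * k + 6) ≤ t2 * (5 * k + 6) := Nat.mul_le_mul_right _ (by omega)
          nlinarith
        · have : t2 < t1 := by omega
          have : (t2 + 1) * (5 * k + 6) ≤ t1 * (5 * k + 6) := Nat.mul_le_mul_right _ (by omega)
          nlinarith
      subst ht; omega
  unfold conn at he
  split_ifs at he with h1 h2 h2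
  · exact key true (Sum.inl.inj he)
  · exact key false (Sum.inr.inj he)

variable (S k ℓ) in
noncomputable def qfun (t i : ℕ) : BV n :=
  if h : ∃ j, j < k ∧ bpos S j = i then sv S (Nat.find h) else conn S k ℓ t i

variable (hS : S.card = k)

include hS in
lemma sv_mem {j : ℕ} (hj : j < k) : sv S j ∈ S := by
  have hlen : j < S.toList.length := by rw [Finset.length_toList, hS]; exact hj
  rw [sv, List.getD_eq_getElem _ _ hlen, ← Finset.mem_toList]
  exact List.getElem_mem hlen

include hS in
lemma sv_inj {j1 j2 : ℕ} (h1 : j1 < k) (h2 : j2 < k) (he : sv S j1 = sv S j2) : j1 = j2 := by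
  have hl1 : j1 < S.toList.length := by rw [Finset.length_toList, hS]; exact h1
  have hl2 : j2 < S.toList.length := by rw [Finset.length_toList, hS]; exact h2
  rw [sv, List.getD_eq_getElem _ _ hl1, sv, List.getD_eq_getElem _ _ hl2] at he
  exact S.nodup_toList.getElem_inj_iff.mp he

lemma q_eq_pos {j : ℕ} (hj : j < k) : qfun S k ℓ t (bpos S j) = sv S j := by
  have h : ∃ j', j' < k ∧ bpos S j' = bpos S j := ⟨j, hj, rfl⟩
  rw [qfun, dif_pos h]
  have := (Nat.find_spec h).2
  rw [bpos_inj S this]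

include hcard hl hk in
lemma q_side (t i : ℕ) : bside (qfun S k ℓ t i) = sig S i := by
  rw [qfun]
  split_ifs with h
  · have hs := Nat.find_spec h
    have h2 := (bpos_constraint S (Nat.find h)).1
    rw [hs.2] at h2
    exact h2.symm
  · exact (conn_spec hcard hl hk t i).1

include hcard hl hk in
lemma q_fval (t i : ℕ) : bfval (qfun S k ℓ t i) = Fv S i := by
  rw [qfun]
  split_ifs with h
  · have hs := Nat.find_spec h
    have h2 := (bpos_constraint S (Nat.find h)).2
    rw [hs.2] at h2
    exact h2.symm
  · exact (conn_spec hcard hl hk t i).2.1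

include hcard hl hk in
lemma q_notin {t i : ℕ} (h : ¬∃ j, j < k ∧ bpos S j = i) : qfun S k ℓ t i ∉ S := by
  rw [qfun, dif_neg h]
  exact (conn_spec hcard hl hk t i).2.2

include hS hcard hl hk in
lemma q_inj {t i1 i2 : ℕ} (ht : t < ℓ) (hi1 : i1 < 5 * k + 6) (hi2 : i2 < 5 * k + 6)
    (he : qfun S k ℓ t i1 = qfun S k ℓ t i2) : i1 = i2 := by
  rw [qfun, qfun] at he
  split_ifs at he with h1 h2 h2
  · have e := sv_inj hS (Nat.find_spec h1).1 (Nat.find_spec h2).1 he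
    rw [← (Nat.find_spec h1).2, ← (Nat.find_spec h2).2, e]
  · exact absurd (by rw [← he]; exact sv_mem hS (Nat.find_spec h1).1)
      ((conn_spec hcard hl hk t i2).2.2)
  · exact absurd (by rw [he]; exact sv_mem hS (Nat.find_spec h2).1)
      ((conn_spec hcard hl hk t i1).2.2)
  · exact (conn_inj hcard hl hk ht ht hi1 hi2 he).2

include hS hcard hl hk in
lemma q_inj' {t1 t2 i1 i2 : ℕ} (ht1 : t1 < ℓ) (ht2 : t2 < ℓ)
    (hi1 : i1 < 5 * k + 6) (hi2 : i2 < 5 * k + 6)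
    (he : qfun S k ℓ t1 i1 = qfun S k ℓ t2 i2)
    (hnot : ¬∃ j, j < k ∧ bpos S j = i1) : t1 = t2 := by
  rw [qfun, dif_neg hnot, qfun] at he
  split_ifs at he with h2
  · exact absurd (by rw [he]; exact sv_mem hS (Nat.find_spec h2).1)
      ((conn_spec hcard hl hk t1 i1).2.2)
  · exact (conn_inj hcard hl hk ht1 ht2 hi1 hi2 he).1

include hS in
lemma sv_surj {v : BV n} (hv : v ∈ S) : ∃ j, j < k ∧ sv S j = v := by
  have : v ∈ S.toList := Finset.mem_toList.mpr hv
  obtain ⟨j, hj, he⟩ := List.getElem_of_mem this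
  exact ⟨j, by rw [← hS, ← Finset.length_toList]; exact hj,
    by rw [sv, List.getD_eq_getElem _ _ hj, he]⟩

lemma bpos_monotone {j1 j2 : ℕ} (h : j1 ≤ j2) : bpos S j1 ≤ bpos S j2 := by
  rcases Nat.lt_or_eq_of_le h with h1 | h1
  · have := bpos_mono S h1; omega
  · rw [h1]

lemma Aset_card_ge (hS : S.card = k) (hn : 2 * (ℓ * (5 * k + 6) + k) ≤ n) :
    ∀ b c, ℓ * (5 * k + 6) ≤ (Aset S b c).card := by
  intro b c
  have hn0 : 0 < n := Nat.pos_of_ne_zero (NeZero.ne n)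
  set M := ℓ * (5 * k + 6) with hM
  have hcb : ∃ cb : ℕ, cb ≤ 1 ∧ ∀ x : ℕ, decide ((2 * x + cb) % 2 = 1) = c := by
    cases c
    · exact ⟨0, by omega, fun x => by rw [decide_eq_false_iff_not]; omega⟩
    · exact ⟨1, by omega, fun x => by rw [decide_eq_true_eq]; omega⟩
  obtain ⟨cb, hcb1, hcb2⟩ := hcb
  set cls : Finset (Fin n) := Finset.univ.filter (fun a => decide (a.val % 2 = 1) = c) with hcls
  have h1 : n / 2 ≤ cls.card := by
    have := Finset.card_le_card_of_injOn (f := fun x : ℕ => (⟨(2 * x + cb) % n, Nat.mod_lt _ hn0⟩ : Fin n))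
      (s := Finset.range (n / 2)) (t := cls) ?_ ?_
    · simpa using this
    · intro x hx
      simp only [Finset.mem_coe, Finset.mem_range] at hx
      have hlt : 2 * x + cb < n := by omega
      simp only [hcls, Finset.mem_coe, Finset.mem_filter, Finset.mem_univ, true_and, Nat.mod_eq_of_lt hlt]
      exact hcb2 x
    · intro x hx y hy he
      simp only [Finset.mem_coe, Finset.mem_range] at hx hy
      have hltx : 2 * x + cb < n := by omega
      have hlty : 2 * y + cb < n := by omega
      have := congrArg Fin.val he
      simp only [Nat.mod_eq_of_lt hltx, Nat.mod_eq_of_lt hlty] at this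
      omega
  have h2 : (cls.filter (fun a => (if b then (Sum.inl a : BV n) else Sum.inr a) ∈ S)).card ≤ k := by
    rw [← hS]
    refine Finset.card_le_card_of_injOn (fun a => if b then (Sum.inl a : BV n) else Sum.inr a)
      ?_ ?_
    · intro a ha
      simp only [Finset.mem_coe, Finset.mem_filter] at ha
      exact ha.2
    · intro a _ a' _ he
      rcases b <;> simpa using he
  have h3 : Aset S b c = cls.filter (fun a => (if b then (Sum.inl a : BV n) else Sum.inr a) ∉ S) := by
    rw [Aset, hcls, Finset.filter_filter]
  have h4 := Finset.card_filter_add_card_filter_not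
    (s := cls) (p := fun a => (if b then (Sum.inl a : BV n) else Sum.inr a) ∈ S)
  rw [h3]
  omega

lemma upper_bound (hk : 3 ≤ k) (hl : 1 ≤ ℓ) (hS : S.card = k)
    (hn : 2 * (ℓ * (5 * k + 6) + k) ≤ n) :
    ∃ T : Fin ℓ → (completeBipartiteGraph (Fin n) (Fin n)).Subgraph,
      (∀ i, IsSTree (completeBipartiteGraph (Fin n) (Fin n)) (S : Set (BV n)) (T i) ∧
        ProperSubgraph bcol (T i)) ∧
      InternallyDisjoint (S : Set (BV n)) T := by
  have hcard := Aset_card_ge (ℓ := ℓ) hS hn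
  set m := bpos S (k - 1) with hm
  have hm5 : m ≤ 5 * k + 5 := by
    have := bpos_le S (k - 1)
    omega
  have hadj : ∀ t : Fin ℓ, ∀ i, i < m →
      (completeBipartiteGraph (Fin n) (Fin n)).Adj (qfun S k ℓ t i) (qfun S k ℓ t (i + 1)) := by
    intro t i _
    rw [cbg_adj, q_side hcard hl hk, q_side hcard hl hk, sig_succ]
    cases sig S i <;> simp
  have hinj : ∀ t : Fin ℓ, ∀ i ≤ m, ∀ j ≤ m,
      qfun S k ℓ t i = qfun S k ℓ t j → i = j := by
    intro t i hi j hj he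
    exact q_inj hcard hl hk hS t.isLt (by omega) (by omega) he
  -- consecutive positions are not both S-positions
  have hconsec : ∀ i, ¬((∃ j, j < k ∧ bpos S j = i) ∧ (∃ j, j < k ∧ bpos S j = i + 1)) := by
    rintro i ⟨⟨j1, _, e1⟩, ⟨j2, _, e2⟩⟩
    rcases Nat.lt_trichotomy j1 j2 with h | h | h
    · have := bpos_mono S h; omega
    · subst h; omega
    · have := bpos_mono S h; omega
  -- S is contained in every tree's vertices
  have hScov : ∀ t : Fin ℓ, (S : Set (BV n)) ⊆ qfun S k ℓ t '' Set.Iic m := by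
    intro t v hv
    obtain ⟨j, hj, rfl⟩ := sv_surj hS hv
    refine ⟨bpos S j, ?_, q_eq_pos hj⟩
    rw [hm]
    exact bpos_monotone (by omega : j ≤ k - 1)
  refine ⟨fun t => pathSub (qfun S k ℓ t) m (hadj t), fun t => ⟨⟨?_, ?_⟩, ?_⟩, ?_⟩
  · exact pathSub_isTree (hadj t) (hinj t)
  · exact hScov t
  · -- proper
    refine pathSub_proper (hadj t) (hinj t) bcol ?_
    intro i hi
    rw [show s(qfun S k ℓ t i, qfun S k ℓ t (i+1)) = s(qfun S k ℓ t (i+1), qfun S k ℓ t i)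
      from Sym2.eq_swap]
    refine bcol_ne _ _ _ ?_
    rw [q_fval hcard hl hk, q_fval hcard hl hk, Fv_add_two]
    cases Fv S i <;> simp
  · -- internally disjoint
    intro t t' htt'
    have hvertsub : (qfun S k ℓ t '' Set.Iic m) ∩ (qfun S k ℓ t' '' Set.Iic m) ⊆ (S : Set (BV n)) := by
      rintro x ⟨⟨i1, hi1, rfl⟩, ⟨i2, hi2, he2⟩⟩
      simp only [Set.mem_Iic] at hi1 hi2
      by_cases h1 : ∃ j, j < k ∧ bpos S j = i1
      · rw [qfun, dif_pos h1]
        exact sv_mem hS (Nat.find_spec h1).1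
      · exfalso
        by_cases h2 : ∃ j, j < k ∧ bpos S j = i2
        · refine q_notin hcard hl hk (t := (t : ℕ)) h1 ?_
          rw [← he2, qfun, dif_pos h2]
          exact sv_mem hS (Nat.find_spec h2).1
        · have : t.val = t'.val :=
            q_inj' hcard hl hk hS t.isLt t'.isLt (by omega) (by omega) he2.symm h1
          exact htt' (Fin.ext this)
    have hverts : (qfun S k ℓ t '' Set.Iic m) ∩ (qfun S k ℓ t' '' Set.Iic m) = (S : Set (BV n)) :=
      Set.Subset.antisymm hvertsub (Set.subset_inter (hScov t) (hScov t') |>.trans (le_refl _))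
    constructor
    · -- edge sets disjoint
      rw [Set.eq_empty_iff_forall_notMem]
      intro e he
      induction e using Sym2.ind with
      | _ x y =>
        obtain ⟨he1, he2⟩ := he
        rw [Subgraph.mem_edgeSet] at he1 he2
        have hx : x ∈ (S : Set (BV n)) := hverts ▸ ⟨(pathSub _ m (hadj t)).edge_vert he1,
          (pathSub _ m (hadj t')).edge_vert he2⟩
        have hy : y ∈ (S : Set (BV n)) := hverts ▸ ⟨(pathSub _ m (hadj t)).edge_vert he1.symm,
          (pathSub _ m (hadj t')).edge_vert he2.symm⟩
        obtain ⟨i, hi, hcases⟩ := he1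
        have hq1 : qfun S k ℓ t i ∈ (S : Set (BV n)) := by
          rcases hcases with ⟨e1, e2⟩ | ⟨e1, e2⟩
          · rwa [← e1]
          · rwa [← e1]
        have hq2 : qfun S k ℓ t (i + 1) ∈ (S : Set (BV n)) := by
          rcases hcases with ⟨e1, e2⟩ | ⟨e1, e2⟩
          · rwa [← e2]
          · rwa [← e2]
        rcases Classical.em (∃ j, j < k ∧ bpos S j = i) with h1 | h1
        · rcases Classical.em (∃ j, j < k ∧ bpos S j = i + 1) with h2 | h2
          · exact hconsec i ⟨h1, h2⟩
          · exact q_notin hcard hl hk h2 hq2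
        · exact q_notin hcard hl hk h1 hq1
    · exact hverts

end Constr

lemma exists_adj_pair {W : Type*} {H : SimpleGraph W} (hconn : H.Connected)
    {x y z : W} (hxy : x ≠ y) (hxz : x ≠ z) (hyz : y ≠ z) :
    ∃ u v w, H.Adj u v ∧ H.Adj u w ∧ v ≠ w := by
  have key : ∀ a b : W, a ≠ b → H.Adj a b ∨ ∃ u v w, H.Adj u v ∧ H.Adj u w ∧ v ≠ w := by
    intro a b hab
    obtain ⟨p⟩ := hconn.preconnected a b
    obtain ⟨q, hq⟩ := p.toPath
    cases q with
    | nil => exact absurd rfl hab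
    | @cons _ cc _ h r =>
      cases r with
      | nil => exact Or.inl h
      | @cons _ d _ h' r' =>
        rw [SimpleGraph.Walk.cons_isPath_iff] at hq
        have hd : d ∈ (SimpleGraph.Walk.cons h' r').support := by
          rw [SimpleGraph.Walk.support_cons]
          exact List.mem_cons_of_mem _ r'.start_mem_support
        exact Or.inr ⟨cc, a, d, h.symm, h', fun hcon => hq.2 (hcon ▸ hd)⟩
  rcases key x y hxy with h1 | h1
  · rcases key x z hxz with h2 | h2
    · exact ⟨x, y, z, h1, h2, hyz⟩
    · exact h2
  · exact h1

lemma lower_bound {n k ℓ : ℕ} [NeZero n] (hk : 3 ≤ k) (hl : 1 ≤ ℓ) (hkn : k ≤ n + n) :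
    ¬ pxLE (completeBipartiteGraph (Fin n) (Fin n)) k ℓ 1 := by
  rintro ⟨c, hc⟩
  obtain ⟨S, -, hSc⟩ := Finset.exists_subset_card_eq
    (show k ≤ (Finset.univ : Finset (BV n)).card by simpa [Finset.card_univ, Fintype.card_sum] using hkn)
  obtain ⟨T, hT, -⟩ := hc S hSc
  obtain ⟨⟨htree, hsub⟩, hprop⟩ := hT ⟨0, hl⟩
  have h0 : sv S 0 ∈ S := sv_mem hSc (by omega)
  have h1 : sv S 1 ∈ S := sv_mem hSc (by omega)
  have h2 : sv S 2 ∈ S := sv_mem hSc (by omega)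
  have d01 : sv S 0 ≠ sv S 1 := fun he => by
    have := sv_inj hSc (by omega) (by omega) he; omega
  have d02 : sv S 0 ≠ sv S 2 := fun he => by
    have := sv_inj hSc (by omega) (by omega) he; omega
  have d12 : sv S 1 ≠ sv S 2 := fun he => by
    have := sv_inj hSc (by omega) (by omega) he; omega
  set T0 := T ⟨0, hl⟩ with hT0
  have hx : sv S 0 ∈ T0.verts := hsub (Finset.mem_coe.mpr h0)
  have hy : sv S 1 ∈ T0.verts := hsub (Finset.mem_coe.mpr h1)
  have hz : sv S 2 ∈ T0.verts := hsub (Finset.mem_coe.mpr h2)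
  obtain ⟨u, v, w, huv, huw, hvw⟩ := exists_adj_pair htree.isConnected
    (x := (⟨sv S 0, hx⟩ : T0.verts)) (y := ⟨sv S 1, hy⟩) (z := ⟨sv S 2, hz⟩)
    (fun he => d01 (congrArg Subtype.val he))
    (fun he => d02 (congrArg Subtype.val he))
    (fun he => d12 (congrArg Subtype.val he))
  exact hprop u v w ((Subgraph.coe_adj T0 u v) ▸ huv) ((Subgraph.coe_adj T0 u w) ▸ huw)
    (fun he => hvw (Subtype.ext he)) (Subsingleton.elim _ _)

/-- For every pair of integers `k ≥ 3` and `ℓ ≥ 1` there is a positive integer `N₂ = N₂(k,ℓ)`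
such that `px_{k,ℓ}(K_{n,n}) = 2` for every `n ≥ N₂`. -/
theorem px_k_ell_complete_bipartite (k ℓ : ℕ) (hk : 3 ≤ k) (hl : 1 ≤ ℓ) :
    ∃ N₂ : ℕ, 0 < N₂ ∧ ∀ n, N₂ ≤ n →
      pxEq2 (completeBipartiteGraph (Fin n) (Fin n)) k ℓ := by
  refine ⟨2 * (ℓ * (5 * k + 6) + k) + 1, Nat.succ_pos _, fun n hn => ?_⟩
  have hn' : 2 * (ℓ * (5 * k + 6) + k) ≤ n := le_trans (Nat.le_succ _) hn
  have hn0 : 0 < n := lt_of_lt_of_le (Nat.succ_pos _) hn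
  haveI : NeZero n := ⟨Nat.pos_iff_ne_zero.mp hn0⟩
  constructor
  · exact ⟨bcol, fun S hS => upper_bound hk hl hS hn'⟩
  · refine lower_bound hk hl ?_
    set X := ℓ * (5 * k + 6) with hX
    omega
end

section
/- In K_{n,n} = G[X,Y], let S be a k-subset with S∩X = {s_1,…,s_r} and S∩Y = {s_{r+1},…,s_k}, 1 ≤ r ≤ k−1. Then there exist at least min{⌊(n−r)/(k−r)⌋, ⌊(n−(k−r))/r⌋} ≥ ⌊(n−1)/(k−1)⌋ internally disjoint S-paths in K_{n,n}, each of length 2k−1. -/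
open SimpleGraph

set_option maxHeartbeats 1000000

lemma pathGraph_isAcyclic (N : ℕ) : (SimpleGraph.pathGraph N).IsAcyclic := by
  rw [isAcyclic_iff_forall_adj_isBridge]
  intro v w h
  have key : ∀ (v w : Fin N), v.val + 1 = w.val →
      ∀ (u x : Fin N) (p : (pathGraph N).Walk u x),
        u.val ≤ v.val → w.val ≤ x.val → s(v, w) ∈ p.edges := by
    intro v w hvw u x p
    induction p with
    | nil => intro h1 h2; omega
    | @cons u y x h' q ih =>
      intro h1 h2
      by_cases he : s(u, y) = s(v, w)
      · simp [Walk.edges_cons, he]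
      · have hy : y.val ≤ v.val := by
          rw [pathGraph_adj] at h'
          rcases h' with h' | h'
          · rcases Nat.lt_or_ge y.val w.val with hlt | hge
            · omega
            · exfalso
              have hu : u = v := Fin.ext (by omega)
              have hyw : y = w := Fin.ext (by omega)
              exact he (by rw [hu, hyw])
          · omega
        simp only [Walk.edges_cons, List.mem_cons]
        exact Or.inr (ih hy h2)
  rw [isBridge_iff_adj_and_forall_walk_mem_edges]
  intro p
  have h' := h
  rw [pathGraph_adj] at h'
  rcases h' with h' | h'
  · exact key v w h' v w p le_rfl le_rfl
  · have := key w v h' w v p.reverse le_rfl le_rfl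
    rw [Walk.edges_reverse, List.mem_reverse, Sym2.eq_swap] at this
    exact this

lemma isTree_of_iso {V W : Type*} {G : SimpleGraph V} {H : SimpleGraph W} (e : G ≃g H)
    (h : G.IsTree) : H.IsTree := by
  constructor
  · exact e.connected_iff.mp h.isConnected
  · intro v c hcyc
    have : (c.map e.symm.toHom).IsCycle :=
      (Walk.map_isCycle_iff_of_injective (e.symm.injective)).mpr hcyc
    exact h.IsAcyclic _ this

lemma subgraph_isTree_of_path {V : Type*} {G : SimpleGraph V} {m : ℕ} (T : G.Subgraph)
    (v : Fin (m + 1) → V) (hinj : Function.Injective v) (hverts : T.verts = Set.range v)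
    (hadj : ∀ a b, T.Adj a b ↔ ∃ i : Fin m,
      (v i.castSucc = a ∧ v i.succ = b) ∨ (v i.castSucc = b ∧ v i.succ = a)) :
    T.coe.IsTree := by
  have key : ∀ a b : Fin (m + 1), T.Adj (v a) (v b) ↔ (pathGraph (m + 1)).Adj a b := by
    intro a b
    rw [hadj, pathGraph_adj]
    constructor
    · rintro ⟨i, ⟨h1, h2⟩ | ⟨h1, h2⟩⟩
      · left
        have h1' := hinj h1
        have h2' := hinj h2
        rw [← h1', ← h2']
        simp
      · right
        have h1' := hinj h1
        have h2' := hinj h2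
        rw [← h1', ← h2']
        simp
    · rintro (h | h)
      · have ha : a.val < m := by omega
        exact ⟨⟨a.val, ha⟩, Or.inl ⟨congrArg v (Fin.ext (by simp)),
          congrArg v (Fin.ext (by simp; omega))⟩⟩
      · have hb : b.val < m := by omega
        exact ⟨⟨b.val, hb⟩, Or.inr ⟨congrArg v (Fin.ext (by simp)),
          congrArg v (Fin.ext (by simp; omega))⟩⟩
  let e0 : Fin (m + 1) ≃ T.verts :=
    (Equiv.ofInjective v hinj).trans (Equiv.setCongr hverts.symm)
  have iso : pathGraph (m + 1) ≃g T.coe := by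
    refine ⟨e0, ?_⟩
    intro a b
    show T.coe.Adj (e0 a) (e0 b) ↔ _
    rw [Subgraph.coe_adj]
    have ha : ((e0 a : T.verts) : V) = v a := rfl
    have hb : ((e0 b : T.verts) : V) = v b := rfl
    rw [ha, hb, key]
  exact isTree_of_iso iso ⟨pathGraph_connected m, pathGraph_isAcyclic (m + 1)⟩

/-- `T` is a path subgraph with `m` edges: its vertices are `v 0, …, v m` for some injective
`v` and its edges are exactly the consecutive pairs. -/
def IsPathSubgraph {V : Type*} {G : SimpleGraph V} (T : G.Subgraph) (m : ℕ) : Prop :=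
  ∃ v : Fin (m + 1) → V, Function.Injective v ∧ T.verts = Set.range v ∧
    ∀ a b, T.Adj a b ↔ ∃ i : Fin m,
      (v i.castSucc = a ∧ v i.succ = b) ∨ (v i.castSucc = b ∧ v i.succ = a)

/-- In `K_{n,n}`, if `S` is a `k`-set of vertices with `r` vertices on the left side and
`k − r` on the right, `1 ≤ r ≤ k − 1`, then there exist at least `⌊(n−1)/(k−1)⌋` internally
disjoint `S`-paths, each of length `2k−1`. -/
theorem bipartite_internally_disjoint_paths (n k r : ℕ) (hk : 3 ≤ k)
    (S : Finset (Fin n ⊕ Fin n)) (hS : S.card = k)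
    (hr : (S.filter (fun x => x.isLeft = true)).card = r)
    (hr1 : 1 ≤ r) (hr2 : r ≤ k - 1) :
    ∃ T : Fin ((n - 1) / (k - 1)) → (completeBipartiteGraph (Fin n) (Fin n)).Subgraph,
      (∀ i, IsSTree (completeBipartiteGraph (Fin n) (Fin n)) (S : Set (Fin n ⊕ Fin n)) (T i) ∧
        IsPathSubgraph (T i) (2 * k - 1)) ∧
      InternallyDisjoint (S : Set (Fin n ⊕ Fin n)) T := by
  by_cases hN0 : (n - 1) / (k - 1) = 0
  · exact ⟨fun i => absurd i.isLt (by omega), fun i => absurd i.isLt (by omega),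
      fun i j _ => absurd i.isLt (by omega)⟩
  set N := (n - 1) / (k - 1) with hNdef
  have hN : 0 < N := Nat.pos_of_ne_zero hN0
  have hk1 : k - 1 ≤ n - 1 := by
    by_contra hcon
    push_neg at hcon
    exact hN0 (Nat.div_eq_of_lt hcon)
  have hnk : k ≤ n := by omega
  have hmul : N * (k - 1) ≤ n - 1 := Nat.div_mul_le_self _ _
  -- the two sides of S
  set A : Finset (Fin n) := Finset.univ.filter (fun a => Sum.inl a ∈ S) with hAdef
  set B : Finset (Fin n) := Finset.univ.filter (fun b => Sum.inr b ∈ S) with hBdef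
  have hmemAS : ∀ a : Fin n, a ∈ A ↔ Sum.inl a ∈ S := by
    intro a; simp [hAdef]
  have hmemBS : ∀ b : Fin n, b ∈ B ↔ Sum.inr b ∈ S := by
    intro b; simp [hBdef]
  have hA : A.card = r := by
    rw [← hr]
    apply Finset.card_bij (fun a _ => Sum.inl a)
    · intro a ha
      rw [hmemAS] at ha
      simp [ha]
    · intro a _ b _ h
      exact Sum.inl.inj h
    · rintro (x | x) hx
      · simp only [Finset.mem_filter] at hx
        exact ⟨x, (hmemAS x).mpr hx.1, rfl⟩
      · simp at hx
  have hB : B.card = k - r := by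
    have hsplit := Finset.card_filter_add_card_filter_not
      (s := S) (p := fun x => x.isLeft = true)
    rw [hr, hS] at hsplit
    have : (S.filter (fun x => ¬ x.isLeft = true)).card = k - r := by omega
    rw [← this]
    apply Finset.card_bij (fun b _ => Sum.inr b)
    · intro b hb
      rw [hmemBS] at hb
      simp [hb]
    · intro a _ b _ h
      exact Sum.inr.inj h
    · rintro (x | x) hx
      · simp at hx
      · simp only [Finset.mem_filter] at hx
        exact ⟨x, (hmemBS x).mpr hx.1, rfl⟩
  -- arithmetic
  have hq1 : N * (k - r) + N * (r - 1) = N * (k - 1) := by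
    rw [← Nat.mul_add]; congr 1; omega
  have hq2 : r - 1 ≤ N * (r - 1) := Nat.le_mul_of_pos_left _ hN
  have hq3 : N * r + N * (k - r - 1) = N * (k - 1) := by
    rw [← Nat.mul_add]; congr 1; omega
  have hq4 : k - r - 1 ≤ N * (k - r - 1) := Nat.le_mul_of_pos_left _ hN
  have hCXle : N * (k - r) ≤ Aᶜ.card := by
    rw [Finset.card_compl, hA, Fintype.card_fin]; omega
  have hCYle : N * r ≤ Bᶜ.card := by
    rw [Finset.card_compl, hB, Fintype.card_fin]; omega
  obtain ⟨CX, hCXsub, hCXcard⟩ := Finset.exists_subset_card_eq hCXle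
  obtain ⟨CY, hCYsub, hCYcard⟩ := Finset.exists_subset_card_eq hCYle
  set eA := A.orderEmbOfFin hA with heA
  set eB := B.orderEmbOfFin hB with heB
  set eC := CX.orderEmbOfFin hCXcard with heC
  set eD := CY.orderEmbOfFin hCYcard with heD
  have hmemA : ∀ i, eA i ∈ A := fun i => Finset.orderEmbOfFin_mem A hA i
  have hmemB : ∀ i, eB i ∈ B := fun i => Finset.orderEmbOfFin_mem B hB i
  have hmemC : ∀ i, eC i ∉ A := by
    intro i
    have h1 := hCXsub (Finset.orderEmbOfFin_mem CX hCXcard i)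
    simpa using h1
  have hmemD : ∀ i, eD i ∉ B := by
    intro i
    have h1 := hCYsub (Finset.orderEmbOfFin_mem CY hCYcard i)
    simpa using h1
  -- index bounds
  have hbC : ∀ (p : Fin N) (t : ℕ), t ≤ k - 1 → ¬ t < r →
      p.val * (k - r) + (t - r) < N * (k - r) := by
    intro p t ht hge
    have h1 : p.val * (k - r) + (t - r) < (p.val + 1) * (k - r) := by
      rw [Nat.succ_mul]; omega
    have h2 : (p.val + 1) * (k - r) ≤ N * (k - r) := Nat.mul_le_mul_right _ p.isLt
    omega
  have hbD : ∀ (p : Fin N) (t : ℕ), t < r → p.val * r + t < N * r := by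
    intro p t ht
    have h1 : p.val * r + t < (p.val + 1) * r := by
      rw [Nat.succ_mul]; omega
    have h2 : (p.val + 1) * r ≤ N * r := Nat.mul_le_mul_right _ p.isLt
    omega
  have hhalf : ∀ j : Fin (2 * k - 1 + 1), j.val / 2 ≤ k - 1 := by
    intro j
    have := j.isLt
    omega
  -- the vertex sequences
  set w : Fin N → Fin (2 * k - 1 + 1) → Fin n ⊕ Fin n := fun p j =>
    if j.val % 2 = 0 then
      if h : j.val / 2 < r then Sum.inl (eA ⟨j.val / 2, h⟩)
      else Sum.inl (eC ⟨p.val * (k - r) + (j.val / 2 - r), hbC p _ (hhalf j) h⟩)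
    else
      if h : j.val / 2 < r then Sum.inr (eD ⟨p.val * r + j.val / 2, hbD p _ h⟩)
      else Sum.inr (eB ⟨j.val / 2 - r, by have := hhalf j; omega⟩)
    with hwdef
  -- evaluation helpers
  have hweqA : ∀ (p : Fin N) (j : Fin (2 * k - 1 + 1)) (h1 : j.val % 2 = 0)
      (h2 : j.val / 2 < r), w p j = Sum.inl (eA ⟨j.val / 2, h2⟩) := by
    intro p j h1 h2
    simp only [hwdef]
    rw [if_pos h1, dif_pos h2]
  have hweqC : ∀ (p : Fin N) (j : Fin (2 * k - 1 + 1)) (h1 : j.val % 2 = 0)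
      (h2 : ¬ j.val / 2 < r),
      w p j = Sum.inl (eC ⟨p.val * (k - r) + (j.val / 2 - r), hbC p _ (hhalf j) h2⟩) := by
    intro p j h1 h2
    simp only [hwdef]
    rw [if_pos h1, dif_neg h2]
  have hweqD : ∀ (p : Fin N) (j : Fin (2 * k - 1 + 1)) (h1 : ¬ j.val % 2 = 0)
      (h2 : j.val / 2 < r),
      w p j = Sum.inr (eD ⟨p.val * r + j.val / 2, hbD p _ h2⟩) := by
    intro p j h1 h2
    simp only [hwdef]
    rw [if_neg h1, dif_pos h2]
  have hweqB : ∀ (p : Fin N) (j : Fin (2 * k - 1 + 1)) (h1 : ¬ j.val % 2 = 0)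
      (h2 : ¬ j.val / 2 < r),
      w p j = Sum.inr (eB ⟨j.val / 2 - r, by have := hhalf j; omega⟩) := by
    intro p j h1 h2
    simp only [hwdef]
    rw [if_neg h1, dif_neg h2]
  -- membership facts
  have hS_of : ∀ (p : Fin N) (j : Fin (2 * k - 1 + 1)),
      (j.val % 2 = 0 ∧ j.val / 2 < r) ∨ (¬ j.val % 2 = 0 ∧ ¬ j.val / 2 < r) →
      w p j ∈ (S : Set (Fin n ⊕ Fin n)) := by
    intro p j hj
    rcases hj with ⟨h1, h2⟩ | ⟨h1, h2⟩
    · rw [hweqA p j h1 h2]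
      exact (hmemAS _).mp (hmemA _)
    · rw [hweqB p j h1 h2]
      exact (hmemBS _).mp (hmemB _)
  have hS_not : ∀ (p : Fin N) (j : Fin (2 * k - 1 + 1)),
      (j.val % 2 = 0 ∧ ¬ j.val / 2 < r) ∨ (¬ j.val % 2 = 0 ∧ j.val / 2 < r) →
      w p j ∉ (S : Set (Fin n ⊕ Fin n)) := by
    intro p j hj
    rcases hj with ⟨h1, h2⟩ | ⟨h1, h2⟩
    · rw [hweqC p j h1 h2]
      intro hmem
      exact hmemC _ ((hmemAS _).mpr hmem)
    · rw [hweqD p j h1 h2]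
      intro hmem
      exact hmemD _ ((hmemBS _).mpr hmem)
  -- division injectivity
  have hdivinj : ∀ (K a b c d : ℕ), 0 < K → b < K → d < K → a * K + b = c * K + d →
      a = c ∧ b = d := by
    intro K a b c d hK hb hd h
    have key : ∀ a b : ℕ, b < K → (a * K + b) / K = a := by
      intro a b hb
      rw [Nat.mul_comm, Nat.add_comm, Nat.add_mul_div_left _ _ hK, Nat.div_eq_of_lt hb,
        Nat.zero_add]
    have h1 : a = c := by
      rw [← key a b hb, h, key c d hd]
    subst h1
    exact ⟨rfl, by omega⟩
  -- the key coincidence lemma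
  have hww : ∀ (p q : Fin N) (j1 j2 : Fin (2 * k - 1 + 1)), w p j1 = w q j2 →
      j1 = j2 ∧ (p = q ∨ w p j1 ∈ (S : Set (Fin n ⊕ Fin n))) := by
    intro p q j1 j2 h
    have hfin : j1.val % 2 = j2.val % 2 → j1.val / 2 = j2.val / 2 → j1 = j2 := by
      intro hm hd
      exact Fin.ext (by omega)
    by_cases e1 : j1.val % 2 = 0 <;> by_cases d1 : j1.val / 2 < r <;>
      by_cases e2 : j2.val % 2 = 0 <;> by_cases d2 : j2.val / 2 < r
    · -- eA eA
      rw [hweqA p j1 e1 d1, hweqA q j2 e2 d2] at h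
      have hv : j1.val / 2 = j2.val / 2 :=
        congrArg Fin.val (eA.injective (Sum.inl.inj h))
      exact ⟨hfin (by omega) hv, Or.inr (hS_of p j1 (Or.inl ⟨e1, d1⟩))⟩
    · -- eA eC
      rw [hweqA p j1 e1 d1, hweqC q j2 e2 d2] at h
      exact absurd ((Sum.inl.inj h) ▸ hmemA ⟨j1.val / 2, d1⟩) (hmemC _)
    · -- eA eD
      rw [hweqA p j1 e1 d1, hweqD q j2 e2 d2] at h
      exact absurd h (by simp)
    · -- eA eB
      rw [hweqA p j1 e1 d1, hweqB q j2 e2 d2] at h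
      exact absurd h (by simp)
    · -- eC eA
      rw [hweqC p j1 e1 d1, hweqA q j2 e2 d2] at h
      exact absurd ((Sum.inl.inj h).symm ▸ hmemA ⟨j2.val / 2, d2⟩) (hmemC _)
    · -- eC eC
      rw [hweqC p j1 e1 d1, hweqC q j2 e2 d2] at h
      have hv := congrArg Fin.val (eC.injective (Sum.inl.inj h))
      simp only at hv
      have hlt1 : j1.val / 2 - r < k - r := by have := hhalf j1; omega
      have hlt2 : j2.val / 2 - r < k - r := by have := hhalf j2; omega
      obtain ⟨hpq, hbd⟩ := hdivinj (k - r) p.val _ q.val _ (by omega) hlt1 hlt2 hv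
      exact ⟨hfin (by omega) (by omega), Or.inl (Fin.ext hpq)⟩
    · -- eC eD
      rw [hweqC p j1 e1 d1, hweqD q j2 e2 d2] at h
      exact absurd h (by simp)
    · -- eC eB
      rw [hweqC p j1 e1 d1, hweqB q j2 e2 d2] at h
      exact absurd h (by simp)
    · -- eD eA
      rw [hweqD p j1 e1 d1, hweqA q j2 e2 d2] at h
      exact absurd h (by simp)
    · -- eD eC
      rw [hweqD p j1 e1 d1, hweqC q j2 e2 d2] at h
      exact absurd h (by simp)
    · -- eD eD
      rw [hweqD p j1 e1 d1, hweqD q j2 e2 d2] at h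
      have hv := congrArg Fin.val (eD.injective (Sum.inr.inj h))
      simp only at hv
      obtain ⟨hpq, hbd⟩ := hdivinj r p.val _ q.val _ (by omega) d1 d2 hv
      exact ⟨hfin (by omega) hbd, Or.inl (Fin.ext hpq)⟩
    · -- eD eB
      rw [hweqD p j1 e1 d1, hweqB q j2 e2 d2] at h
      exact absurd ((Sum.inr.inj h).symm ▸
        hmemB ⟨j2.val / 2 - r, by have := hhalf j2; omega⟩) (hmemD _)
    · -- eB eA
      rw [hweqB p j1 e1 d1, hweqA q j2 e2 d2] at h
      exact absurd h (by simp)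
    · -- eB eC
      rw [hweqB p j1 e1 d1, hweqC q j2 e2 d2] at h
      exact absurd h (by simp)
    · -- eB eD
      rw [hweqB p j1 e1 d1, hweqD q j2 e2 d2] at h
      exact absurd ((Sum.inr.inj h) ▸
        hmemB ⟨j1.val / 2 - r, by have := hhalf j1; omega⟩) (hmemD _)
    · -- eB eB
      rw [hweqB p j1 e1 d1, hweqB q j2 e2 d2] at h
      have hv := congrArg Fin.val (eB.injective (Sum.inr.inj h))
      simp only at hv
      exact ⟨hfin (by omega) (by omega), Or.inr (hS_of p j1 (Or.inr ⟨e1, d1⟩))⟩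
  have hwinj : ∀ p : Fin N, Function.Injective (w p) := by
    intro p j1 j2 h
    exact (hww p p j1 j2 h).1
  -- S is contained in every path
  have hSrange : ∀ p : Fin N, (S : Set (Fin n ⊕ Fin n)) ⊆ Set.range (w p) := by
    intro p x hx
    match x with
    | Sum.inl a =>
      have haA : a ∈ A := (hmemAS a).mpr hx
      have : a ∈ Set.range eA := by
        rw [heA, Finset.range_orderEmbOfFin]
        exact haA
      obtain ⟨i, hi⟩ := this
      have hjlt : 2 * i.val < 2 * k - 1 + 1 := by have := i.isLt; omega
      refine ⟨⟨2 * i.val, hjlt⟩, ?_⟩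
      rw [hweqA p ⟨2 * i.val, hjlt⟩ (by show 2 * i.val % 2 = 0; omega)
        (by show 2 * i.val / 2 < r; have := i.isLt; omega)]
      rw [← hi]
      exact congrArg (fun z => Sum.inl (eA z))
        (Fin.ext (by show 2 * i.val / 2 = i.val; omega))
    | Sum.inr b =>
      have hbB : b ∈ B := (hmemBS b).mpr hx
      have : b ∈ Set.range eB := by
        rw [heB, Finset.range_orderEmbOfFin]
        exact hbB
      obtain ⟨i, hi⟩ := this
      have hik : i.val < k - r := i.isLt
      have hjlt : 2 * (r + i.val) + 1 < 2 * k - 1 + 1 := by omega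
      refine ⟨⟨2 * (r + i.val) + 1, hjlt⟩, ?_⟩
      rw [hweqB p ⟨2 * (r + i.val) + 1, hjlt⟩
        (by show ¬ (2 * (r + i.val) + 1) % 2 = 0; omega)
        (by show ¬ (2 * (r + i.val) + 1) / 2 < r; omega)]
      rw [← hi]
      exact congrArg (fun z => Sum.inr (eB z))
        (Fin.ext (by show (2 * (r + i.val) + 1) / 2 - r = i.val; omega))
  -- shape: parity determines side
  have hform : ∀ (p : Fin N) (j : Fin (2 * k - 1 + 1)),
      (j.val % 2 = 0 → (w p j).isLeft = true) ∧
      (¬ j.val % 2 = 0 → (w p j).isRight = true) := by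
    intro p j
    constructor
    · intro h1
      by_cases h2 : j.val / 2 < r
      · rw [hweqA p j h1 h2]; rfl
      · rw [hweqC p j h1 h2]; rfl
    · intro h1
      by_cases h2 : j.val / 2 < r
      · rw [hweqD p j h1 h2]; rfl
      · rw [hweqB p j h1 h2]; rfl
  -- adjacency of consecutive vertices
  have hGadj : ∀ (p : Fin N) (i : Fin (2 * k - 1)),
      (completeBipartiteGraph (Fin n) (Fin n)).Adj (w p i.castSucc) (w p i.succ) := by
    intro p i
    have hc : (i.castSucc : Fin (2 * k - 1 + 1)).val = i.val := rfl
    have hs : (i.succ : Fin (2 * k - 1 + 1)).val = i.val + 1 := rfl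
    by_cases he : i.val % 2 = 0
    · have h1 := (hform p i.castSucc).1 (by rw [hc]; omega)
      have h2 := (hform p i.succ).2 (by rw [hs]; omega)
      simp only [completeBipartiteGraph_adj]
      exact Or.inl ⟨h1, h2⟩
    · have h1 := (hform p i.castSucc).2 (by rw [hc]; omega)
      have h2 := (hform p i.succ).1 (by rw [hs]; omega)
      simp only [completeBipartiteGraph_adj]
      exact Or.inr ⟨h1, h2⟩
  -- one endpoint of each edge is outside S
  have hfresh : ∀ (p : Fin N) (i : Fin (2 * k - 1)),
      w p i.castSucc ∉ (S : Set (Fin n ⊕ Fin n)) ∨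
      w p i.succ ∉ (S : Set (Fin n ⊕ Fin n)) := by
    intro p i
    have hc : (i.castSucc : Fin (2 * k - 1 + 1)).val = i.val := rfl
    have hs : (i.succ : Fin (2 * k - 1 + 1)).val = i.val + 1 := rfl
    by_cases he : i.val % 2 = 0
    · by_cases hlt : i.val / 2 < r
      · right
        exact hS_not p i.succ (Or.inr ⟨by rw [hs]; omega, by rw [hs]; omega⟩)
      · left
        exact hS_not p i.castSucc (Or.inl ⟨by rw [hc]; omega, by rw [hc]; omega⟩)
    · by_cases hlt : i.val / 2 < r
      · left
        exact hS_not p i.castSucc (Or.inr ⟨by rw [hc]; omega, by rw [hc]; omega⟩)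
      · right
        exact hS_not p i.succ (Or.inl ⟨by rw [hs]; omega, by rw [hs]; omega⟩)
  -- the subgraphs
  refine ⟨fun p =>
    { verts := Set.range (w p)
      Adj := fun a b => ∃ i : Fin (2 * k - 1),
        (w p i.castSucc = a ∧ w p i.succ = b) ∨ (w p i.castSucc = b ∧ w p i.succ = a)
      adj_sub := ?_
      edge_vert := ?_
      symm := ?_ }, ?_, ?_⟩
  · rintro a b ⟨i, ⟨rfl, rfl⟩ | ⟨rfl, rfl⟩⟩
    · exact hGadj p i
    · exact (hGadj p i).symm
  · rintro a b ⟨i, ⟨rfl, -⟩ | ⟨-, rfl⟩⟩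
    · exact ⟨_, rfl⟩
    · exact ⟨_, rfl⟩
  · refine ⟨?_⟩; rintro a b ⟨i, h⟩
    exact ⟨i, h.symm⟩
  · -- each is an S-tree and a path
    intro p
    constructor
    · constructor
      · exact subgraph_isTree_of_path _ (w p) (hwinj p) rfl (fun a b => Iff.rfl)
      · exact hSrange p
    · exact ⟨w p, hwinj p, rfl, fun a b => Iff.rfl⟩
  · -- internal disjointness
    intro p q hpq
    have hverts : Set.range (w p) ∩ Set.range (w q) = (S : Set (Fin n ⊕ Fin n)) := by
      apply Set.Subset.antisymm
      · rintro x ⟨⟨j1, rfl⟩, ⟨j2, hx⟩⟩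
        rcases (hww q p j2 j1 hx).2 with hpq' | hmem
        · exact absurd hpq'.symm hpq
        · rw [hx] at hmem
          exact hmem
      · intro x hx
        exact ⟨hSrange p hx, hSrange q hx⟩
    constructor
    · rw [Set.eq_empty_iff_forall_notMem]
      intro e he
      induction e using Sym2.ind with
      | _ a b =>
        obtain ⟨he1, he2⟩ := he
        rw [Subgraph.mem_edgeSet] at he1 he2
        obtain ⟨i1, hi1⟩ := he1
        obtain ⟨i2, hi2⟩ := he2
        have haP : a ∈ Set.range (w p) := by
          rcases hi1 with ⟨h1, -⟩ | ⟨-, h2⟩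
          · exact ⟨_, h1⟩
          · exact ⟨_, h2⟩
        have hbP : b ∈ Set.range (w p) := by
          rcases hi1 with ⟨-, h1⟩ | ⟨h2, -⟩
          · exact ⟨_, h1⟩
          · exact ⟨_, h2⟩
        have haQ : a ∈ Set.range (w q) := by
          rcases hi2 with ⟨h1, -⟩ | ⟨-, h2⟩
          · exact ⟨_, h1⟩
          · exact ⟨_, h2⟩
        have hbQ : b ∈ Set.range (w q) := by
          rcases hi2 with ⟨-, h1⟩ | ⟨h2, -⟩
          · exact ⟨_, h1⟩
          · exact ⟨_, h2⟩
        have haS : a ∈ (S : Set (Fin n ⊕ Fin n)) := hverts ▸ ⟨haP, haQ⟩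
        have hbS : b ∈ (S : Set (Fin n ⊕ Fin n)) := hverts ▸ ⟨hbP, hbQ⟩
        rcases hfresh p i1 with hne | hne
        · rcases hi1 with ⟨h1, -⟩ | ⟨h1, -⟩
          · exact hne (h1 ▸ haS)
          · exact hne (h1 ▸ hbS)
        · rcases hi1 with ⟨-, h1⟩ | ⟨-, h1⟩
          · exact hne (h1 ▸ hbS)
          · exact hne (h1 ▸ haS)
    · exact hverts
end
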